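/- Let u ∈ (0,1] and let v(j) = a(j) − (c(j)/c(j+1))·a(j+1) for j = 1, 2, …. Then v(j) ≤ v(j+1) ≤ 0 for all j ≥ 1, and both inequalities are strict. (For u = 0 one has v(j) = 0 for all j, so the inequalities hold with equality if and only if u = 0.) -/

import Mathlib

/-- Lemma 3.1: for `u ∈ (0,1]`, with `c(j) = a(j)(1-u)+u` and
`v(j) = a(j) - (c(j)/c(j+1))·a(j+1)`, one has `v(j) < v(j+1) < 0` for all `j ≥ 1`. -/
theorem fighter_v_strict
    (a : ℕ → ℝ) (haI : ∀ j, a j ∈ Set.Icc (0:ℝ) 1) (ha0 : a 0 = 0)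
    (hmono : StrictMono a)
    (hconc : ∀ j : ℕ, a (j + 2) - a (j + 1) < a (j + 1) - a j)
    (u : ℝ) (hu0 : 0 < u) (hu1 : u ≤ 1)
    (c : ℕ → ℝ) (hc : ∀ j, c j = a j * (1 - u) + u)
    (v : ℕ → ℝ) (hv : ∀ j, 1 ≤ j → v j = a j - (c j / c (j + 1)) * a (j + 1)) :
    (∀ j, 1 ≤ j → v j < v (j + 1)) ∧ (∀ j, 1 ≤ j → v j < 0) := by
  have hcpos : ∀ j, 0 < c j := by
    intro j
    have h0 := (haI j).1
    have h1 : (0:ℝ) ≤ 1 - u := by linarith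
    rw [hc j]
    nlinarith [mul_nonneg h0 h1]
  have hvform : ∀ j, 1 ≤ j → v j = u * (a j - a (j + 1)) / c (j + 1) := by
    intro j hj
    rw [hv j hj, hc j, hc (j + 1)]
    have hne : a (j + 1) * (1 - u) + u ≠ 0 := by
      have := hcpos (j + 1); rw [hc (j + 1)] at this; linarith
    rw [eq_div_iff hne, sub_mul, div_mul_eq_mul_div, div_mul_cancel₀ _ hne]
    ring
  have hstep : ∀ j, a j < a (j + 1) := fun j => hmono (Nat.lt_succ_self j)
  have hcmono : ∀ j, c j ≤ c (j + 1) := by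
    intro j
    rw [hc j, hc (j + 1)]
    have h1 : (0:ℝ) ≤ 1 - u := by linarith
    nlinarith [hstep j]
  constructor
  · intro j hj
    rw [hvform j hj, hvform (j + 1) (le_trans hj (Nat.le_succ j))]
    rw [div_lt_div_iff₀ (hcpos (j + 1)) (hcpos (j + 1 + 1))]
    have hconcj := hconc j
    have hd2 : 0 < a (j + 1 + 1) - a (j + 1) := by linarith [hstep (j + 1)]
    have key : (a (j + 1 + 1) - a (j + 1)) * c (j + 1) <
        (a (j + 1) - a j) * c (j + 1 + 1) := by
      nlinarith [hcmono (j + 1), hcpos (j + 1), hcpos (j + 1 + 1)]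
    nlinarith [mul_pos hu0 (hcpos (j + 1)), mul_lt_mul_of_pos_left key hu0]
  · intro j hj
    rw [hvform j hj]
    exact div_neg_of_neg_of_pos (by nlinarith [hstep j]) (hcpos (j + 1))
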